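/- Let ℓ ∈ ℕ, ν ∈ ℕ, and let G(z) ∈ 𝔽_q[z]^{(k₀+⋯+k_{ℓ−1}+1)×n} be formed by stacking blocks G₀(z), …, G_ℓ(z), where for i = 0,…,ℓ−1 the block G_i(z) has k_i rows each of row degree ν+ℓ−i, and G_ℓ(z) is a single row of degree ν. Let 𝒢 be the L × n constant matrix obtained by stacking the coefficient matrices Φ₁(G₀(z)), …, Φ₁(G_ℓ(z)), where L = Σ_{j=0}^{ℓ−1} k_j(ν+ℓ+1−j) + ν + 1. If n ≥ L and 𝒢 is superregular, then the convolutional code generated by G(z) has free distance exactly n(ν+1). -/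

import Mathlib

/-- A family of row vectors is *superregular* if every square submatrix, obtained by
selecting rows and columns injectively, has nonzero determinant; equivalently all
minors of all sizes are nonzero. -/
def SuperregularFamily {F ι κ : Type*} [CommRing F] (M : ι → κ → F) : Prop :=
  ∀ (t : ℕ) (r : Fin t → ι) (c : Fin t → κ),
    Function.Injective r → Function.Injective c →
      Matrix.det (Matrix.of fun a b => M (r a) (c b)) ≠ 0

/-- The weight of a vector of univariate polynomials: the total number of nonzero
field coefficients over all components and all degrees. -/
def wtP {F : Type*} [Semiring F] {n : ℕ} (w : Fin n → Polynomial F) : ℕ :=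
  ∑ j, (w j).support.card

/-- Row index type for a matrix stacked from blocks `G₀,…,G_{ℓ-1}` (block `i` having
`k i` rows) followed by a single last row `G_ℓ`. -/
abbrev RowIdx (ℓ : ℕ) (k : Fin ℓ → ℕ) : Type := (Σ i : Fin ℓ, Fin (k i)) ⊕ Unit

/-- Row index type for the stacked coefficient matrix `𝒢` of such a matrix: the
coefficient rows of a row of degree `ν+ℓ−i` (resp. `ν`) are indexed by
`Fin (ν+ℓ−i+1)` (resp. `Fin (ν+1)`). -/
abbrev CoeffIdx (ℓ ν : ℕ) (k : Fin ℓ → ℕ) : Type :=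
  (Σ i : Fin ℓ, Fin (k i) × Fin (ν + ℓ - i.1 + 1)) ⊕ Fin (ν + 1)


section Helpers

variable {ℓ ν : ℕ} {k : Fin ℓ → ℕ}

def rowOf : CoeffIdx ℓ ν k → RowIdx ℓ k :=
  Sum.elim (fun q => Sum.inl ⟨q.1, q.2.1⟩) (fun _ => Sum.inr ())

def degOf : CoeffIdx ℓ ν k → ℕ :=
  Sum.elim (fun q => (q.2.2 : ℕ)) (fun t => (t : ℕ))

def mdeg (ν : ℕ) : RowIdx ℓ k → ℕ :=
  Sum.elim (fun q => ν + ℓ - q.1.1) (fun _ => ν)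

lemma degOf_le (p : CoeffIdx ℓ ν k) : degOf p ≤ mdeg ν (rowOf p) := by
  rcases p with ⟨i, rr, b⟩ | t
  · simpa [degOf, mdeg, rowOf] using Nat.lt_succ_iff.mp b.isLt
  · simpa [degOf, mdeg, rowOf] using Nat.lt_succ_iff.mp t.isLt

lemma mdeg_ge (r : RowIdx ℓ k) : ν ≤ mdeg ν r := by
  rcases r with ⟨i, rr⟩ | _
  · simp [mdeg]; omega
  · simp [mdeg]

lemma mdeg_inl (i : Fin ℓ) (rr : Fin (k i)) :
    mdeg ν (Sum.inl ⟨i, rr⟩ : RowIdx ℓ k) = ν + ℓ - i.1 := rfl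

lemma exists_coeffIdx (r : RowIdx ℓ k) (b : ℕ) (hb : b ≤ mdeg ν r) :
    ∃ p : CoeffIdx ℓ ν k, rowOf p = r ∧ degOf p = b := by
  rcases r with ⟨i, rr⟩ | uu
  · exact ⟨Sum.inl ⟨i, (rr, ⟨b, by simp [mdeg] at hb; omega⟩)⟩, rfl, rfl⟩
  · cases uu
    exact ⟨Sum.inr ⟨b, by simp [mdeg] at hb; omega⟩, rfl, rfl⟩

lemma sum_rowOf (f : RowIdx ℓ k → ℕ) :
    ∑ p : CoeffIdx ℓ ν k, f (rowOf p) = ∑ r : RowIdx ℓ k, (mdeg ν r + 1) * f r := by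
  rw [Fintype.sum_sum_type, Fintype.sum_sum_type]
  congr 1
  · rw [← Finset.univ_sigma_univ, Finset.sum_sigma, ← Finset.univ_sigma_univ, Finset.sum_sigma]
    refine Finset.sum_congr rfl (fun i _ => ?_)
    rw [Fintype.sum_prod_type]
    refine Finset.sum_congr rfl (fun rr _ => ?_)
    simp [rowOf, mdeg, Finset.sum_const, mul_comm]
  · simp [rowOf, mdeg, Finset.sum_const]

end Helpers

open Finset Polynomial
open scoped Classical

lemma coeff_mul_fin {F : Type*} [Field F] (p q : Polynomial F) (d s : ℕ)
    (hq : q.natDegree ≤ d) :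
    (p * q).coeff s =
      ∑ b : Fin (d + 1), (if (b : ℕ) ≤ s then p.coeff (s - b) else 0) * q.coeff b := by
  set z : ℕ → F := fun b => (if b ≤ s then p.coeff (s - b) else 0) * q.coeff b with hz
  have h1 : (p * q).coeff s = ∑ b ∈ Finset.range (s + 1), q.coeff b * p.coeff (s - b) := by
    rw [mul_comm, Polynomial.coeff_mul, Finset.Nat.sum_antidiagonal_eq_sum_range_succ_mk]
  have h2 : ∑ b ∈ Finset.range (s + 1), q.coeff b * p.coeff (s - b)
      = ∑ b ∈ Finset.range (s + 1), z b := by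
    apply Finset.sum_congr rfl
    intro b hb
    rw [Finset.mem_range] at hb
    rw [hz]
    simp only []
    rw [if_pos (by omega), mul_comm]
  have h3 : ∑ b ∈ Finset.range (s + 1), z b = ∑ b ∈ Finset.range (s + 1 + (d + 1)), z b := by
    apply Finset.sum_subset (Finset.range_subset_range.mpr (by omega))
    intro b _ hb
    rw [Finset.mem_range] at hb
    push_neg at hb
    rw [hz]; simp only []
    rw [if_neg (by omega), zero_mul]
  have h4 : ∑ b ∈ Finset.range (d + 1), z b = ∑ b ∈ Finset.range (s + 1 + (d + 1)), z b := by
    apply Finset.sum_subset (Finset.range_subset_range.mpr (by omega))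
    intro b _ hb
    rw [Finset.mem_range] at hb
    push_neg at hb
    have hq0 : q.coeff b = 0 := Polynomial.coeff_eq_zero_of_natDegree_lt (by omega)
    rw [hz]; simp only []
    rw [hq0, mul_zero]
  rw [h1, h2, h3, ← h4, ← Fin.sum_univ_eq_sum_range z (d + 1)]

lemma sr_mds {F : Type*} [Field F] {ι : Type*} [Fintype ι] {n : ℕ}
    (M : ι → Fin n → F) (hsr : SuperregularFamily M) (y : ι → F) (hy : y ≠ 0) :
    n + 1 ≤ (Finset.univ.filter fun j => ∑ p, y p * M p j ≠ 0).card
      + (Finset.univ.filter fun p => y p ≠ 0).card := by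
  set Y := Finset.univ.filter fun p => y p ≠ 0 with hY
  set Z := Finset.univ.filter fun j => ∑ p, y p * M p j = 0 with hZ
  have hYpos : 0 < Y.card := by
    obtain ⟨p, hp⟩ := Function.ne_iff.mp hy
    exact Finset.card_pos.mpr ⟨p, by simp [hY]; exact hp⟩
  have hZn : Z.card ≤ n := by
    have := Finset.card_le_card (Finset.filter_subset
      (fun j => ∑ p, y p * M p j = 0) (Finset.univ : Finset (Fin n)))
    simpa using this
  have hsplit : (Finset.univ.filter fun j => ∑ p, y p * M p j ≠ 0).card + Z.card = n := by
    have := Finset.card_filter_add_card_filter_not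
      (s := (Finset.univ : Finset (Fin n))) (p := fun j => ∑ p, y p * M p j = 0)
    rw [hZ]
    simp only [Finset.card_univ, Fintype.card_fin] at this
    have he : (Finset.univ.filter fun j => ¬ (∑ p, y p * M p j = 0))
        = (Finset.univ.filter fun j => ∑ p, y p * M p j ≠ 0) := by
      apply Finset.filter_congr; intro j _; rfl
    rw [he] at this
    omega
  have hZY : Z.card < Y.card := by
    by_contra hcon
    push_neg at hcon
    set w := Y.card with hw
    have hr : Function.Injective (fun a : Fin w => (Y.equivFin.symm a : ι)) :=
      fun a b hab => Y.equivFin.symm.injective (Subtype.coe_injective hab)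
    have hc : Function.Injective
        (fun a : Fin w => (Z.equivFin.symm (Fin.castLE hcon a) : Fin n)) := by
      intro a b hab
      have := Z.equivFin.symm.injective (Subtype.coe_injective hab)
      exact Fin.castLE_injective hcon this
    have hdet := hsr w _ _ hr hc
    apply hdet
    rw [← Matrix.exists_vecMul_eq_zero_iff]
    refine ⟨fun a => y (Y.equivFin.symm a : ι), ?_, ?_⟩
    · intro h0
      have h1 := congrFun h0 ⟨0, hYpos⟩
      simp only [Pi.zero_apply] at h1
      have hmem := (Y.equivFin.symm ⟨0, hYpos⟩).2
      exact (Finset.mem_filter.mp hmem).2 h1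
    · funext b
      show ∑ a : Fin w, y (Y.equivFin.symm a : ι) *
          M (Y.equivFin.symm a : ι) (Z.equivFin.symm (Fin.castLE hcon b) : Fin n) = 0
      set j := (Z.equivFin.symm (Fin.castLE hcon b) : Fin n) with hj
      have e1 : ∑ a : Fin w, y (Y.equivFin.symm a : ι) * M (Y.equivFin.symm a : ι) j
          = ∑ p : {x // x ∈ Y}, y (p : ι) * M (p : ι) j :=
        Equiv.sum_comp Y.equivFin.symm (fun p : {x // x ∈ Y} => y (p : ι) * M (p : ι) j)
      have e2 : ∑ p : {x // x ∈ Y}, y (p : ι) * M (p : ι) j = ∑ p ∈ Y, y p * M p j :=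
        Finset.sum_coe_sort Y (fun p => y p * M p j)
      have e3 : ∑ p ∈ Y, y p * M p j = ∑ p, y p * M p j :=
        Finset.sum_filter_of_ne (fun p _ h => by
          intro h0; exact h (by rw [h0, zero_mul]))
      rw [e1, e2, e3]
      have hjZ := (Z.equivFin.symm (Fin.castLE hcon b)).2
      exact (Finset.mem_filter.mp hjZ).2
  omega

lemma arith_main (n ν c K : ℕ) (hc : ν + 1 ≤ c) (hK : K + (ν + 1) ≤ n) :
    (ν + 1) * (c - ν) + (c - (ν + 1)) * K + n * (ν + 1) ≤ c * (n + 1) := by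
  obtain ⟨e, rfl⟩ : ∃ e, c = ν + 1 + e := ⟨c - (ν + 1), by omega⟩
  obtain ⟨g, rfl⟩ : ∃ g, n = ν + 1 + K + g := ⟨n - (ν + 1 + K), by omega⟩
  have h1 : ν + 1 + e - ν = e + 1 := by omega
  have h2 : ν + 1 + e - (ν + 1) = e := by omega
  rw [h1, h2]
  ring_nf
  nlinarith [Nat.zero_le (e * g)]

lemma lower_bound {F : Type*} [Field F] {n ℓ ν : ℕ} (k : Fin ℓ → ℕ)
    (G : RowIdx ℓ k → Fin n → Polynomial F)
    (hrow : ∀ (i : Fin ℓ) (r : Fin (k i)) (j : Fin n),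
      (G (Sum.inl ⟨i, r⟩) j).natDegree ≤ ν + ℓ - i.1)
    (hlast : ∀ j, (G (Sum.inr ()) j).natDegree ≤ ν)
    (hn : (∑ i : Fin ℓ, k i * (ν + ℓ + 1 - i.1)) + ν + 1 ≤ n)
    (hsr : SuperregularFamily fun (p : CoeffIdx ℓ ν k) (j : Fin n) =>
      Sum.elim (fun q : Σ i : Fin ℓ, Fin (k i) × Fin (ν + ℓ - i.1 + 1) =>
          (G (Sum.inl ⟨q.1, q.2.1⟩) j).coeff q.2.2)
        (fun t : Fin (ν + 1) => (G (Sum.inr ()) j).coeff t) p)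
    (u : RowIdx ℓ k → Polynomial F) (hu : u ≠ 0) :
    n * (ν + 1) ≤ wtP (fun j => ∑ i, u i * G i j) := by
  classical
  set M : CoeffIdx ℓ ν k → Fin n → F := fun p j =>
    Sum.elim (fun q : Σ i : Fin ℓ, Fin (k i) × Fin (ν + ℓ - i.1 + 1) =>
        (G (Sum.inl ⟨q.1, q.2.1⟩) j).coeff q.2.2)
      (fun t : Fin (ν + 1) => (G (Sum.inr ()) j).coeff t) p with hMdef
  set v : Fin n → Polynomial F := fun j => ∑ i, u i * G i j with hv
  set y : ℕ → CoeffIdx ℓ ν k → F := fun s p =>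
    if degOf p ≤ s then (u (rowOf p)).coeff (s - degOf p) else 0 with hy
  -- slice identity
  have slice : ∀ (j : Fin n) (s : ℕ), (v j).coeff s = ∑ p, y s p * M p j := by
    intro j s
    show (∑ i, u i * G i j).coeff s = ∑ p, y s p * M p j
    rw [Polynomial.finset_sum_coeff]
    rw [Fintype.sum_sum_type (f := fun r : RowIdx ℓ k => (u r * G r j).coeff s),
        Fintype.sum_sum_type (f := fun p : CoeffIdx ℓ ν k => y s p * M p j)]
    congr 1
    · rw [← Finset.univ_sigma_univ, Finset.sum_sigma, ← Finset.univ_sigma_univ, Finset.sum_sigma]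
      refine Finset.sum_congr rfl (fun i _ => ?_)
      rw [Fintype.sum_prod_type]
      refine Finset.sum_congr rfl (fun rr _ => ?_)
      rw [coeff_mul_fin (u (Sum.inl ⟨i, rr⟩)) (G (Sum.inl ⟨i, rr⟩) j) (ν + ℓ - i.1) s
        (hrow i rr j)]
      rfl
    · rw [show ∑ x : Unit, (u (Sum.inr x) * G (Sum.inr x) j).coeff s
          = (u (Sum.inr ()) * G (Sum.inr ()) j).coeff s from Fintype.sum_unique _]
      rw [coeff_mul_fin (u (Sum.inr ())) (G (Sum.inr ()) j) ν s (hlast j)]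
      rfl
  -- K
  set K := ∑ i : Fin ℓ, k i * (ν + ℓ - i.1 + 1) with hKdef
  have hKeq : K = ∑ i : Fin ℓ, k i * (ν + ℓ + 1 - i.1) :=
    Finset.sum_congr rfl (fun i _ => by have := i.isLt; congr 1; omega)
  have hKn : K + (ν + 1) ≤ n := by rw [hKeq]; omega
  -- the set R of nonzero rows and top degree δ
  set R : Finset (RowIdx ℓ k) := Finset.univ.filter (fun r => u r ≠ 0) with hR
  have hRne : R.Nonempty := by
    obtain ⟨r, hr⟩ := Function.ne_iff.mp hu
    exact ⟨r, Finset.mem_filter.mpr ⟨Finset.mem_univ _, hr⟩⟩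
  set δ := R.sup (fun r => (u r).natDegree + mdeg ν r) with hδ
  have hδtop : ∀ r : RowIdx ℓ k, u r ≠ 0 → (u r).natDegree + mdeg ν r ≤ δ := by
    intro r hr
    exact Finset.le_sup (f := fun r => (u r).natDegree + mdeg ν r)
      (Finset.mem_filter.mpr ⟨Finset.mem_univ _, hr⟩)
  obtain ⟨rstar, hrstarR, hrstar'⟩ :=
    Finset.exists_mem_eq_sup R hRne (fun r => (u r).natDegree + mdeg ν r)
  have hrstar : δ = (u rstar).natDegree + mdeg ν rstar := by rw [hδ]; exact hrstar'
  have hrstar0 : u rstar ≠ 0 := (Finset.mem_filter.mp hrstarR).2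
  -- Sset
  set Sset : ℕ → Prop := fun s =>
    ∃ p : CoeffIdx ℓ ν k, degOf p ≤ s ∧ (u (rowOf p)).coeff (s - degOf p) ≠ 0 with hSset
  have hSy : ∀ s, Sset s → y s ≠ 0 := by
    rintro s ⟨p, h1, h2⟩
    refine Function.ne_iff.mpr ⟨p, ?_⟩
    rw [hy]; simp only []
    rw [if_pos h1]
    simpa using h2
  have hSδ : Sset δ := by
    obtain ⟨p, hp1, hp2⟩ := exists_coeffIdx rstar (mdeg ν rstar) le_rfl
    refine ⟨p, by omega, ?_⟩
    rw [hp1, hp2]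
    have he : δ - mdeg ν rstar = (u rstar).natDegree := by omega
    rw [he]
    exact Polynomial.mem_support_iff.mp (Polynomial.natDegree_mem_support_of_nonzero hrstar0)
  -- a₀
  have hex : ∃ t, ∀ s, t ≤ s → s ≤ δ → Sset s :=
    ⟨δ, fun s h1 h2 => by have h : s = δ := le_antisymm h2 h1; rwa [h]⟩
  set a₀ := Nat.find hex with ha₀def
  have ha₀spec : ∀ s, a₀ ≤ s → s ≤ δ → Sset s := Nat.find_spec hex
  have ha₀δ : a₀ ≤ δ :=
    Nat.find_le (fun s h1 h2 => by have h : s = δ := le_antisymm h2 h1; rwa [h])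
  set c := δ + 1 - a₀ with hc
  -- minimality of a₀
  have hmin : ∀ (r : RowIdx ℓ k) (a s : ℕ), (u r).coeff a ≠ 0 → a ≤ s → s ≤ a + mdeg ν r →
      a₀ ≤ s → s ≤ δ → a₀ ≤ a := by
    intro r a s ha has hsam ha₀s hsδ
    by_contra hcon
    push_neg at hcon
    have hprop : ∀ s', a ≤ s' → s' ≤ δ → Sset s' := by
      intro s' h1 h2
      by_cases h3 : a₀ ≤ s'
      · exact ha₀spec s' h3 h2
      · push_neg at h3
        obtain ⟨p, hp1, hp2⟩ := exists_coeffIdx (ν := ν) r (s' - a) (by omega)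
        refine ⟨p, by omega, ?_⟩
        rw [hp1, hp2]
        have he : s' - (s' - a) = a := by omega
        rw [he]; exact ha
    have h8 : Nat.find hex ≤ a := Nat.find_le hprop
    omega
  have hcν : ν + 1 ≤ c := by
    have h1 : a₀ ≤ (u rstar).natDegree := by
      refine hmin rstar ((u rstar).natDegree) δ ?_ (by omega) (by omega) ha₀δ le_rfl
      exact Polynomial.mem_support_iff.mp (Polynomial.natDegree_mem_support_of_nonzero hrstar0)
    have h2 : ν ≤ mdeg ν rstar := mdeg_ge rstar
    omega
  -- the finsets A r
  set A : RowIdx ℓ k → Finset ℕ := fun r =>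
    (u r).support.filter (fun a => a₀ ≤ a ∧ a + mdeg ν r ≤ δ) with hA
  have hAcard : ∀ r, (A r).card ≤ c - mdeg ν r := by
    intro r
    by_cases hm : mdeg ν r ≤ δ
    · have hsub : A r ⊆ Finset.Icc a₀ (δ - mdeg ν r) := by
        intro a haA
        rw [hA, Finset.mem_filter] at haA
        rw [Finset.mem_Icc]; omega
      calc (A r).card ≤ (Finset.Icc a₀ (δ - mdeg ν r)).card := Finset.card_le_card hsub
        _ = δ - mdeg ν r + 1 - a₀ := Nat.card_Icc _ _
        _ ≤ c - mdeg ν r := by omega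
    · have hempty : A r = ∅ := by
        rw [Finset.eq_empty_iff_forall_notMem]
        intro a haA
        rw [hA, Finset.mem_filter] at haA
        omega
      simp [hempty]
  -- per-slice counts
  set Nj : ℕ → ℕ := fun s => (Finset.univ.filter fun j => (v j).coeff s ≠ 0).card with hNj
  set Ys : ℕ → ℕ := fun s => (Finset.univ.filter fun p => y s p ≠ 0).card with hYs
  have hslice : ∀ s ∈ Finset.Icc a₀ δ, n + 1 ≤ Nj s + Ys s := by
    intro s hs
    rw [Finset.mem_Icc] at hs
    have hy0 : y s ≠ 0 := hSy s (ha₀spec s hs.1 hs.2)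
    have hmds := sr_mds M hsr (y s) hy0
    have hfe : (Finset.univ.filter fun j => ∑ p, y s p * M p j ≠ 0)
        = Finset.univ.filter fun j => (v j).coeff s ≠ 0 := by
      apply Finset.filter_congr
      intro j _
      rw [slice j s]
    rw [hfe] at hmds
    exact hmds
  have hsum1 : c * (n + 1) ≤ (∑ s ∈ Finset.Icc a₀ δ, Nj s) + ∑ s ∈ Finset.Icc a₀ δ, Ys s := by
    have h := Finset.sum_le_sum hslice
    rw [Finset.sum_const, Nat.card_Icc, Finset.sum_add_distrib, smul_eq_mul,
      show δ + 1 - a₀ = c from hc.symm] at h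
    omega
  -- bound on ∑ Ys
  have hYbound : ∑ s ∈ Finset.Icc a₀ δ, Ys s ≤ (ν + 1) * (c - ν) + (c - (ν + 1)) * K := by
    have h2 : ∑ s ∈ Finset.Icc a₀ δ, Ys s
        = ∑ p : CoeffIdx ℓ ν k, ((Finset.Icc a₀ δ).filter fun s => y s p ≠ 0).card := by
      calc ∑ s ∈ Finset.Icc a₀ δ, Ys s
          = ∑ s ∈ Finset.Icc a₀ δ, ∑ p : CoeffIdx ℓ ν k, (if y s p ≠ 0 then 1 else 0) := by
            refine Finset.sum_congr rfl fun s _ => Finset.card_filter _ _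
        _ = ∑ p : CoeffIdx ℓ ν k, ∑ s ∈ Finset.Icc a₀ δ, (if y s p ≠ 0 then 1 else 0) :=
            Finset.sum_comm
        _ = ∑ p : CoeffIdx ℓ ν k, ((Finset.Icc a₀ δ).filter fun s => y s p ≠ 0).card := by
            refine Finset.sum_congr rfl fun p _ => (Finset.card_filter _ _).symm
    have h3 : ∀ p : CoeffIdx ℓ ν k,
        ((Finset.Icc a₀ δ).filter fun s => y s p ≠ 0).card ≤ (A (rowOf p)).card := by
      intro p
      have hyne : ∀ s, y s p ≠ 0 → degOf p ≤ s ∧ (u (rowOf p)).coeff (s - degOf p) ≠ 0 := by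
        intro s hsp
        rw [hy] at hsp; simp only [] at hsp
        by_cases hds : degOf p ≤ s
        · rw [if_pos hds] at hsp; exact ⟨hds, hsp⟩
        · rw [if_neg hds] at hsp; exact absurd rfl hsp
      apply Finset.card_le_card_of_injOn (fun s => s - degOf p)
      · intro s hs
        rw [Finset.mem_coe, Finset.mem_filter, Finset.mem_Icc] at hs
        obtain ⟨⟨h1', h2'⟩, h3'⟩ := hs
        obtain ⟨hds, hcoeff⟩ := hyne s h3'
        have hadeg : s - degOf p ≤ (u (rowOf p)).natDegree :=
          Polynomial.le_natDegree_of_ne_zero hcoeff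
        have hu0 : u (rowOf p) ≠ 0 := fun h0 => hcoeff (by rw [h0]; simp)
        rw [Finset.mem_coe, hA, Finset.mem_filter]; beta_reduce
        refine ⟨Polynomial.mem_support_iff.mpr hcoeff, ?_, ?_⟩
        · refine hmin (rowOf p) (s - degOf p) s hcoeff (by omega) ?_ h1' h2'
          have := degOf_le p; omega
        · have := hδtop (rowOf p) hu0; omega
      · intro s1 hs1 s2 hs2 he
        simp only [Finset.coe_filter, Set.mem_setOf_eq, Finset.mem_Icc] at hs1 hs2
        have hd1 := (hyne s1 hs1.2).1
        have hd2 := (hyne s2 hs2.2).1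
        have he' : s1 - degOf p = s2 - degOf p := he
        omega
    set bnd : RowIdx ℓ k → ℕ :=
      Sum.elim (fun q : Σ i : Fin ℓ, Fin (k i) => (ν + ℓ - q.1.1 + 1) * (c - (ν + 1)))
        (fun _ => (ν + 1) * (c - ν)) with hbnd
    have h5 : ∀ r : RowIdx ℓ k, (mdeg ν r + 1) * (A r).card ≤ bnd r := by
      rintro (⟨i, rr⟩ | uu)
      · have h6 : (A (Sum.inl ⟨i, rr⟩)).card ≤ c - (ν + 1) := by
          have := hAcard (Sum.inl ⟨i, rr⟩)
          rw [mdeg_inl] at this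
          have hi := i.isLt
          omega
        calc (mdeg ν (Sum.inl ⟨i, rr⟩) + 1) * (A (Sum.inl ⟨i, rr⟩)).card
            = (ν + ℓ - i.1 + 1) * (A (Sum.inl ⟨i, rr⟩)).card := by rw [mdeg_inl]
          _ ≤ (ν + ℓ - i.1 + 1) * (c - (ν + 1)) := Nat.mul_le_mul_left _ h6
          _ = bnd (Sum.inl ⟨i, rr⟩) := rfl
      · cases uu
        have h6 : (A (Sum.inr ())).card ≤ c - ν := hAcard (Sum.inr ())
        calc (mdeg ν (Sum.inr ()) + 1) * (A (Sum.inr ())).card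
            = (ν + 1) * (A (Sum.inr ())).card := rfl
          _ ≤ (ν + 1) * (c - ν) := Nat.mul_le_mul_left _ h6
          _ = bnd (Sum.inr ()) := rfl
    have h7 : ∑ r : RowIdx ℓ k, bnd r = (c - (ν + 1)) * K + (ν + 1) * (c - ν) := by
      rw [Fintype.sum_sum_type]
      congr 1
      · rw [← Finset.univ_sigma_univ, Finset.sum_sigma]
        rw [hKdef, Finset.mul_sum]
        refine Finset.sum_congr rfl (fun i _ => ?_)
        simp only [hbnd, Sum.elim_inl, Finset.sum_const, Finset.card_univ,
          Fintype.card_fin, smul_eq_mul]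
        ring
    calc ∑ s ∈ Finset.Icc a₀ δ, Ys s
        = ∑ p : CoeffIdx ℓ ν k, ((Finset.Icc a₀ δ).filter fun s => y s p ≠ 0).card := h2
      _ ≤ ∑ p : CoeffIdx ℓ ν k, (A (rowOf p)).card :=
          Finset.sum_le_sum (fun p _ => h3 p)
      _ = ∑ r : RowIdx ℓ k, (mdeg ν r + 1) * (A r).card :=
          sum_rowOf (ν := ν) (k := k) (fun r => (A r).card)
      _ ≤ ∑ r : RowIdx ℓ k, bnd r := Finset.sum_le_sum (fun r _ => h5 r)
      _ = (c - (ν + 1)) * K + (ν + 1) * (c - ν) := h7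
      _ = (ν + 1) * (c - ν) + (c - (ν + 1)) * K := by ring
  have harith := arith_main n ν c K hcν hKn
  have hNsum : n * (ν + 1) ≤ ∑ s ∈ Finset.Icc a₀ δ, Nj s := by omega
  -- conclude
  have hwt : ∑ s ∈ Finset.Icc a₀ δ, Nj s ≤ wtP v := by
    rw [wtP]
    calc ∑ s ∈ Finset.Icc a₀ δ, Nj s
        = ∑ s ∈ Finset.Icc a₀ δ, ∑ j : Fin n, (if (v j).coeff s ≠ 0 then 1 else 0) := by
          refine Finset.sum_congr rfl fun s _ => Finset.card_filter _ _
      _ = ∑ j : Fin n, ∑ s ∈ Finset.Icc a₀ δ, (if (v j).coeff s ≠ 0 then 1 else 0) :=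
          Finset.sum_comm
      _ = ∑ j : Fin n, ((Finset.Icc a₀ δ).filter fun s => (v j).coeff s ≠ 0).card := by
          refine Finset.sum_congr rfl fun j _ => (Finset.card_filter _ _).symm
      _ ≤ ∑ j : Fin n, (v j).support.card := by
          refine Finset.sum_le_sum fun j _ => Finset.card_le_card ?_
          intro s hs
          rw [Finset.mem_filter] at hs
          exact Polynomial.mem_support_iff.mpr hs.2
  calc n * (ν + 1) ≤ ∑ s ∈ Finset.Icc a₀ δ, Nj s := hNsum
    _ ≤ wtP v := hwt

lemma upper_bound {F : Type*} [Field F] {n ℓ ν : ℕ}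
    (k : Fin ℓ → ℕ) (G : RowIdx ℓ k → Fin n → Polynomial F)
    (hlast : ∀ j, (G (Sum.inr ()) j).natDegree ≤ ν)
    (hsr : SuperregularFamily fun (p : CoeffIdx ℓ ν k) (j : Fin n) =>
      Sum.elim (fun q : Σ i : Fin ℓ, Fin (k i) × Fin (ν + ℓ - i.1 + 1) =>
          (G (Sum.inl ⟨q.1, q.2.1⟩) j).coeff q.2.2)
        (fun t : Fin (ν + 1) => (G (Sum.inr ()) j).coeff t) p) :
    (∃ u : RowIdx ℓ k → Polynomial F, u ≠ 0 ∧
        wtP (fun j => ∑ i, u i * G i j) = n * (ν + 1)) := by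
  classical
  refine ⟨fun r => if r = Sum.inr () then 1 else 0, ?_, ?_⟩
  · intro h0
    have h1 := congrFun h0 (Sum.inr ())
    simp at h1
  · have hval : ∀ j : Fin n,
        (∑ i, (if i = Sum.inr () then (1 : Polynomial F) else 0) * G i j)
          = G (Sum.inr ()) j := by
      intro j
      rw [Finset.sum_eq_single (Sum.inr ())]
      · simp
      · intro b _ hb; simp [hb]
      · intro hmem; exact absurd (Finset.mem_univ _) hmem
    have hsupp : ∀ j : Fin n, (G (Sum.inr ()) j).support = Finset.range (ν + 1) := by
      intro j
      ext t
      rw [Polynomial.mem_support_iff, Finset.mem_range]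
      constructor
      · intro ht
        by_contra hcon
        push_neg at hcon
        exact ht (Polynomial.coeff_eq_zero_of_natDegree_lt (by have := hlast j; omega))
      · intro ht
        have hdet := hsr 1 (fun _ => Sum.inr ⟨t, ht⟩) (fun _ => j)
          (fun a b _ => Subsingleton.elim a b) (fun a b _ => Subsingleton.elim a b)
        rw [Matrix.det_fin_one] at hdet
        simpa using hdet
    rw [wtP]
    calc ∑ j, ((fun j => ∑ i, (if i = Sum.inr () then (1 : Polynomial F) else 0) * G i j) j).support.card
        = ∑ j : Fin n, (ν + 1) := by
          refine Finset.sum_congr rfl fun j _ => ?_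
          simp only [hval j, hsupp j, Finset.card_range]
      _ = n * (ν + 1) := by simp [Finset.sum_const, mul_comm]


/-- With `G(z)` stacked from blocks `G₀(z),…,G_{ℓ−1}(z)` (block `i`
having `k i` rows, each of row degree `ν+ℓ−i`) and a single last row `G_ℓ(z)` of degree
`ν`, let `𝒢` be the `L × n` constant matrix stacking `Φ₁(G₀(z)),…,Φ₁(G_ℓ(z))`, where
`L = Σ_{j<ℓ} k_j(ν+ℓ+1−j) + ν + 1`. If `n ≥ L` and `𝒢` is superregular, then the code
generated by `G(z)` has free distance exactly `n(ν+1)`. -/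
theorem oneD_free_distance_exact {F : Type*} [Field F] [Fintype F] {n ℓ ν : ℕ}
    (k : Fin ℓ → ℕ) (G : RowIdx ℓ k → Fin n → Polynomial F)
    (hG : LinearIndependent (Polynomial F) G)
    (hrow : ∀ (i : Fin ℓ) (r : Fin (k i)) (j : Fin n),
      (G (Sum.inl ⟨i, r⟩) j).natDegree ≤ ν + ℓ - i.1)
    (hrow' : ∀ (i : Fin ℓ) (r : Fin (k i)), ∃ j, (G (Sum.inl ⟨i, r⟩) j).coeff (ν + ℓ - i.1) ≠ 0)
    (hlast : ∀ j, (G (Sum.inr ()) j).natDegree ≤ ν)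
    (hlast' : ∃ j, (G (Sum.inr ()) j).coeff ν ≠ 0)
    (hn : (∑ i : Fin ℓ, k i * (ν + ℓ + 1 - i.1)) + ν + 1 ≤ n)
    (hsr : SuperregularFamily fun (p : CoeffIdx ℓ ν k) (j : Fin n) =>
      Sum.elim (fun q : Σ i : Fin ℓ, Fin (k i) × Fin (ν + ℓ - i.1 + 1) =>
          (G (Sum.inl ⟨q.1, q.2.1⟩) j).coeff q.2.2)
        (fun t : Fin (ν + 1) => (G (Sum.inr ()) j).coeff t) p) :
    (∀ u : RowIdx ℓ k → Polynomial F, u ≠ 0 →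
        n * (ν + 1) ≤ wtP (fun j => ∑ i, u i * G i j)) ∧
      (∃ u : RowIdx ℓ k → Polynomial F, u ≠ 0 ∧
        wtP (fun j => ∑ i, u i * G i j) = n * (ν + 1)) := by
  constructor
  · intro u hu
    exact lower_bound k G hrow hlast hn hsr u hu
  · exact upper_bound k G hlast hsr
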